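/- For every integer k ≥ 2 and every ℓ with 1 ≤ ℓ ≤ k - 1, ∑_{j=1}^{k} (-1)^j C(k, j) ∑_{m=0}^{2ℓ} (-1)^m C(2ℓ, m) (j/2)^m · S(2ℓ+j-m, j) / C(2ℓ+j-m, j) = 0, where S denotes the Stirling numbers of the second kind. -/

import Mathlib

open scoped Classical BigOperators Nat

/-- Weighted Stirling numbers of the second kind (Carlitz). -/
noncomputable def weightedR (n k : ℕ) (r : ℝ) : ℝ :=
  (1 / (k ! : ℝ)) * ∑ j ∈ Finset.range (k + 1),
    (-1 : ℝ) ^ (k - j) * (k.choose j) * (r + j) ^ n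

/-- Central factorial numbers of the second kind. -/
noncomputable def centralT (n ℓ : ℕ) : ℝ :=
  (1 / (ℓ ! : ℝ)) * ∑ j ∈ Finset.range (ℓ + 1),
    (-1 : ℝ) ^ j * (ℓ.choose j) * ((ℓ : ℝ) / 2 - j) ^ n

/-- Stirling numbers of the second kind. -/
def stirlingS : ℕ → ℕ → ℕ
  | 0, 0 => 1
  | 0, _ + 1 => 0
  | _ + 1, 0 => 0
  | n + 1, k + 1 => (k + 1) * stirlingS n (k + 1) + stirlingS n k

/-- The sinc function. -/
noncomputable def sinc (z : ℂ) : ℂ := if z = 0 then 1 else Complex.sin z / z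

/-- The hyperbolic sinc function. -/
noncomputable def sinhc (z : ℂ) : ℂ := if z = 0 then 1 else Complex.sinh z / z

/-- Partial Bell polynomials. -/
noncomputable def bellB (n k : ℕ) (x : ℕ → ℝ) : ℝ :=
  ∑ ℓ ∈ Finset.univ.filter (fun ℓ : Fin n → Fin (n + 1) =>
      (∑ i, (i.1 + 1) * (ℓ i).1) = n ∧ (∑ i, (ℓ i).1) = k),
    ((n ! : ℝ) / ∏ i, ((ℓ i).1)!) * ∏ i, (x (i.1 + 1) / (i.1 + 1)!) ^ (ℓ i).1

/-- Rising factorial of a real number. -/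
noncomputable def risingF (x : ℝ) (k : ℕ) : ℝ := ∏ i ∈ Finset.range k, (x + i)

/-- Number of set partitions of an `n`-element set into `ℓ` odd-sized blocks. -/
noncomputable def oddPartCount (n ℓ : ℕ) : ℕ :=
  ((Finset.univ : Finset (Finset (Finset (Fin n)))).filter
    (fun P : Finset (Finset (Fin n)) => P.card = ℓ ∧ (∀ b ∈ P, Odd b.card) ∧
      ((P : Set (Finset (Fin n))).PairwiseDisjoint id) ∧
      P.sup id = Finset.univ)).card

open Finset PowerSeries
open scoped Nat

lemma stirling_eq_zero : ∀ n j : ℕ, n < j → stirlingS n j = 0 := by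
  intro n
  induction n with
  | zero => intro j hj; match j, hj with
    | j+1, _ => rfl
  | succ n ih =>
    intro j hj
    match j, hj with
    | j+1, hj =>
      show (j+1) * stirlingS n (j+1) + stirlingS n j = 0
      rw [ih _ (by omega), ih _ (by omega)]; ring

lemma stirling_formula (n j : ℕ) :
    ∑ i ∈ range (j+1), (-1:ℝ)^i * (j.choose i) * (i:ℝ)^n
      = (-1)^j * (j ! : ℝ) * stirlingS n j := by
  induction n generalizing j with
  | zero =>
    rcases j with _ | m
    · simp [stirlingS]
    · rw [stirling_eq_zero 0 (m+1) (by omega)]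
      have := Int.alternating_sum_range_choose (n := m+1)
      rw [if_neg (by omega)] at this
      have : (∑ i ∈ range (m+1+1), (-1:ℝ)^i * ((m+1).choose i)) = 0 := by
        exact_mod_cast congrArg (fun z : ℤ => (z : ℝ)) this
      simpa using this
  | succ n ih =>
    rcases j with _ | K
    · simp [stirlingS]
    · have key : ∀ i : ℕ, (i:ℝ) * ((K+1).choose i) = (K+1) * (((K+1).choose i : ℝ) - (K.choose i : ℝ)) := by
        intro i
        rcases i with _ | i
        · simp
        · have pascal : (K+1).choose (i+1) = K.choose i + K.choose (i+1) := Nat.choose_succ_succ K i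
          have h2 : (K+1) * K.choose i = (K+1).choose (i+1) * (i+1) := Nat.add_one_mul_choose_eq K i
          have : ((K+1).choose (i+1) : ℝ) - (K.choose (i+1) : ℝ) = (K.choose i : ℝ) := by
            rw [pascal]; push_cast; ring
          rw [this]
          have h2' := congrArg (Nat.cast (R := ℝ)) h2
          push_cast at h2' ⊢
          linarith
      have expand : ∑ i ∈ range (K+2), (-1:ℝ)^i * ((K+1).choose i) * (i:ℝ)^(n+1)
          = (K+1) * ((∑ i ∈ range (K+2), (-1:ℝ)^i * ((K+1).choose i) * (i:ℝ)^n)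
              - (∑ i ∈ range (K+2), (-1:ℝ)^i * (K.choose i) * (i:ℝ)^n)) := by
        rw [← Finset.sum_sub_distrib, Finset.mul_sum]
        refine Finset.sum_congr rfl fun i _ => ?_
        have : (-1:ℝ)^i * ((K+1).choose i) * (i:ℝ)^(n+1)
            = (-1:ℝ)^i * ((i:ℝ) * ((K+1).choose i)) * (i:ℝ)^n := by ring
        rw [this, key i]; ring
      have trunc : (∑ i ∈ range (K+2), (-1:ℝ)^i * (K.choose i) * (i:ℝ)^n)
          = ∑ i ∈ range (K+1), (-1:ℝ)^i * (K.choose i) * (i:ℝ)^n := by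
        rw [Finset.sum_range_succ, Nat.choose_succ_self]; simp
      rw [expand, trunc, ih (K+1), ih K]
      have hrec : stirlingS (n+1) (K+1) = (K+1) * stirlingS n (K+1) + stirlingS n K := rfl
      rw [hrec, Nat.factorial_succ]
      push_cast
      ring

open PowerSeries

lemma coeff_rescale_exp (a : ℝ) (n : ℕ) :
    coeff n (rescale a (exp ℝ)) = a^n / n ! := by
  rw [coeff_rescale, coeff_exp]
  simp [div_eq_mul_inv]

lemma rescale_exp_pow (a : ℝ) (j : ℕ) :
    (rescale a (exp ℝ))^j = rescale ((j:ℝ)*a) (exp ℝ) := by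
  induction j with
  | zero =>
    ext n
    simp only [pow_zero, Nat.cast_zero, zero_mul]
    rw [coeff_rescale]
    rcases n with _ | n
    · simp [coeff_exp]
    · simp [coeff_exp, zero_pow]
  | succ j ih =>
    rw [pow_succ, ih, exp_mul_exp_eq_exp_add]
    congr 1
    push_cast; ring

lemma coeff_exp_sub_one_pow (n j : ℕ) :
    coeff n ((exp ℝ - 1)^j) = (j ! : ℝ) * stirlingS n j / n ! := by
  rw [sub_pow]
  rw [map_sum]
  have : ∀ i ∈ range (j+1),
      coeff n ((-1:ℝ⟦X⟧)^(i+j) * exp ℝ ^ i * 1^(j-i) * (j.choose i : ℝ⟦X⟧))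
        = (-1:ℝ)^(i+j) * (j.choose i : ℝ) * (i:ℝ)^n / n ! := by
    intro i _
    have h1 : ((-1:ℝ⟦X⟧)^(i+j) * exp ℝ ^ i * 1^(j-i) * (j.choose i : ℝ⟦X⟧))
        = PowerSeries.C ((-1:ℝ)^(i+j) * (j.choose i : ℝ)) * exp ℝ ^ i := by
      simp only [map_mul, map_pow, map_neg, map_one, map_natCast, one_pow]
      ring
    rw [h1, coeff_C_mul]
    rw [exp_pow_eq_rescale_exp, coeff_rescale_exp]
    ring
  rw [Finset.sum_congr rfl this]
  have : ∑ i ∈ range (j+1), (-1:ℝ)^(i+j) * (j.choose i : ℝ) * (i:ℝ)^n / n !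
      = ((-1)^j * ∑ i ∈ range (j+1), (-1:ℝ)^i * (j.choose i : ℝ) * (i:ℝ)^n) / n ! := by
    rw [Finset.mul_sum, Finset.sum_div]
    refine Finset.sum_congr rfl fun i _ => ?_
    rw [pow_add]; ring
  rw [this, stirling_formula]
  have : ((-1:ℝ)^j * ((-1)^j * (j ! : ℝ) * stirlingS n j)) = (j ! : ℝ) * stirlingS n j := by
    rw [← mul_assoc, ← mul_assoc, ← pow_add]
    rw [← two_mul, pow_mul]
    norm_num
  rw [this]

lemma coeff_pow_eq_zero {f : ℝ⟦X⟧} (h0 : coeff 0 f = 0) (h1 : coeff 1 f = 0) :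
    ∀ (K n : ℕ), n < 2*K → coeff n (f^K) = 0 := by
  intro K
  induction K with
  | zero => intro n hn; omega
  | succ K ih =>
    intro n hn
    rw [pow_succ, mul_comm, coeff_mul]
    refine Finset.sum_eq_zero fun p hp => ?_
    rw [Finset.HasAntidiagonal.mem_antidiagonal] at hp
    rcases Nat.lt_or_ge p.1 2 with h | h
    · interval_cases h' : p.1 <;> simp_all
    · have : p.2 < 2*K := by omega
      rw [ih p.2 this, mul_zero]

noncomputable def sSer : ℝ⟦X⟧ := PowerSeries.mk fun n => if Even n then ((((n+1)! : ℝ)) * 2^n)⁻¹ else 0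

lemma X_mul_sSer : (X : ℝ⟦X⟧) * sSer = rescale (2⁻¹ : ℝ) (exp ℝ) - rescale (-2⁻¹ : ℝ) (exp ℝ) := by
  ext n
  rw [map_sub, coeff_rescale_exp, coeff_rescale_exp]
  rcases n with _ | n
  · simp
  · rw [coeff_succ_X_mul, sSer, coeff_mk]
    rcases Nat.even_or_odd n with he | ho
    · rw [if_pos he]
      have h1 : (-2⁻¹ : ℝ)^(n+1) = -(2⁻¹:ℝ)^(n+1) :=
        Odd.neg_pow (Even.add_one he) _
      rw [h1]
      have h2 : ((n+1)! : ℝ) ≠ 0 := Nat.cast_ne_zero.2 (Nat.factorial_ne_zero _)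
      have h3 : (2:ℝ)^n ≠ 0 := by positivity
      field_simp
      ring_nf
      rw [← mul_pow]; norm_num
    · rw [if_neg (Nat.not_even_iff_odd.mpr ho)]
      have h1 : (-2⁻¹ : ℝ)^(n+1) = (2⁻¹:ℝ)^(n+1) :=
        Even.neg_pow (Odd.add_one ho) _
      rw [h1]
      ring

lemma G_eq : rescale (2⁻¹ : ℝ) (exp ℝ) - rescale (-2⁻¹ : ℝ) (exp ℝ)
    = rescale (-2⁻¹ : ℝ) (exp ℝ) * (exp ℝ - 1) := by
  rw [mul_sub, mul_one]
  congr 1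
  have h : rescale (-2⁻¹:ℝ) (exp ℝ) * exp ℝ = rescale (-2⁻¹:ℝ) (exp ℝ) * rescale (1:ℝ) (exp ℝ) := by
    rw [rescale_one]; rfl
  rw [h, exp_mul_exp_eq_exp_add]
  norm_num

lemma coeff_sSer_pow (L j : ℕ) (hL : 1 ≤ L) :
    coeff (2*L) (sSer ^ j)
      = ∑ m ∈ range (2*L+1), ((j:ℝ)*(-2⁻¹))^m / m !
          * ((j ! : ℝ) * stirlingS (2*L+j-m) j / (2*L+j-m)!) := by
  have h1 : coeff (2*L) (sSer ^ j) = coeff (2*L + j) ((X:ℝ⟦X⟧)^j * sSer^j) :=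
    (coeff_X_pow_mul (sSer^j) j (2*L)).symm
  rw [h1, ← mul_pow, X_mul_sSer, G_eq, mul_pow, rescale_exp_pow, coeff_mul]
  rw [Finset.Nat.sum_antidiagonal_eq_sum_range_succ_mk]
  have h2 : ∀ m ∈ range (2*L+j+1),
      coeff m (rescale ((j:ℝ)*(-2⁻¹)) (exp ℝ)) * coeff (2*L+j-m) ((exp ℝ - 1)^j)
        = ((j:ℝ)*(-2⁻¹))^m / m ! * ((j ! : ℝ) * stirlingS (2*L+j-m) j / (2*L+j-m)!) := by
    intro m _
    rw [coeff_rescale_exp, coeff_exp_sub_one_pow]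
  rw [Finset.sum_congr rfl h2]
  symm
  apply Finset.sum_subset
  · apply Finset.range_subset_range.2; omega
  · intro m hm hm'
    rw [Finset.mem_range] at hm hm'
    have : 2*L + j - m < j := by omega
    rw [stirling_eq_zero _ _ this]
    simp

lemma inner_eq (L j : ℕ) (hL : 1 ≤ L) :
    (∑ m ∈ range (2*L+1), (-1:ℝ)^m * ((2*L).choose m) * ((j:ℝ)/2)^m
        * (stirlingS (2*L+j-m) j) / ((2*L+j-m).choose j))
    = ((2*L)! : ℝ) * coeff (2*L) (sSer ^ j) := by
  rw [coeff_sSer_pow L j hL, Finset.mul_sum]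
  refine Finset.sum_congr rfl fun m hm => ?_
  rw [Finset.mem_range] at hm
  have hm' : m ≤ 2*L := by omega
  have hjN : j ≤ 2*L+j-m := by omega
  have hNj : 2*L+j-m - j = 2*L - m := by omega
  have f1 : ((2*L).choose m : ℝ) * m ! * (2*L-m)! = (2*L)! := by
    exact_mod_cast congrArg (Nat.cast (R:=ℝ)) (Nat.choose_mul_factorial_mul_factorial hm')
  have f2 : ((2*L+j-m).choose j : ℝ) * j ! * (2*L-m)! = (2*L+j-m)! := by
    have h := Nat.choose_mul_factorial_mul_factorial hjN
    rw [hNj] at h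
    exact_mod_cast congrArg (Nat.cast (R:=ℝ)) h
  have hb : ((2*L+j-m).choose j : ℝ) ≠ 0 := Nat.cast_ne_zero.2 (Nat.choose_pos hjN).ne'
  have hmf : (m ! : ℝ) ≠ 0 := Nat.cast_ne_zero.2 (Nat.factorial_ne_zero _)
  have hNf : ((2*L+j-m)! : ℝ) ≠ 0 := Nat.cast_ne_zero.2 (Nat.factorial_ne_zero _)
  have hjf : (j ! : ℝ) ≠ 0 := Nat.cast_ne_zero.2 (Nat.factorial_ne_zero _)
  have hLm : ((2*L-m)! : ℝ) ≠ 0 := Nat.cast_ne_zero.2 (Nat.factorial_ne_zero _)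
  have hneg : ((j:ℝ)*(-2⁻¹))^m = (-1)^m * ((j:ℝ)/2)^m := by
    rw [show (j:ℝ)*(-2⁻¹) = -1 * ((j:ℝ)/2) by ring, mul_pow]
  rw [hneg, ← f1, ← f2]
  field_simp

theorem stmt8 (k ℓ : ℕ) (hk : 2 ≤ k) (h1 : 1 ≤ ℓ) (h2 : ℓ ≤ k - 1) :
    ∑ j ∈ Finset.Icc 1 k, (-1 : ℝ) ^ j * (k.choose j) *
      ∑ m ∈ Finset.range (2 * ℓ + 1),
        (-1 : ℝ) ^ m * ((2 * ℓ).choose m) * ((j : ℝ) / 2) ^ m *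
          (stirlingS (2 * ℓ + j - m) j) / ((2 * ℓ + j - m).choose j) = 0 := by
  have key : ∀ j : ℕ, (∑ m ∈ Finset.range (2 * ℓ + 1),
        (-1 : ℝ) ^ m * ((2 * ℓ).choose m) * ((j : ℝ) / 2) ^ m *
          (stirlingS (2 * ℓ + j - m) j) / ((2 * ℓ + j - m).choose j))
      = ((2*ℓ)! : ℝ) * coeff (2*ℓ) (sSer ^ j) := fun j => inner_eq ℓ j h1
  have step1 : ∑ j ∈ Finset.Icc 1 k, (-1 : ℝ) ^ j * (k.choose j) *
      ∑ m ∈ Finset.range (2 * ℓ + 1),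
        (-1 : ℝ) ^ m * ((2 * ℓ).choose m) * ((j : ℝ) / 2) ^ m *
          (stirlingS (2 * ℓ + j - m) j) / ((2 * ℓ + j - m).choose j)
      = ∑ j ∈ Finset.Icc 1 k, (-1 : ℝ) ^ j * (k.choose j) *
          (((2*ℓ)! : ℝ) * coeff (2*ℓ) (sSer ^ j)) :=
    Finset.sum_congr rfl fun j _ => by rw [key j]
  rw [step1]
  have hzero : (-1 : ℝ)^0 * ((k.choose 0 : ℕ) : ℝ) * (((2*ℓ)! : ℝ) * coeff (2*ℓ) (sSer ^ 0)) = 0 := by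
    rw [pow_zero, pow_zero, coeff_one, if_neg (by omega : ¬ (2*ℓ = 0))]
    ring
  have step2 : ∑ j ∈ Finset.Icc 1 k, (-1 : ℝ) ^ j * (k.choose j) *
          (((2*ℓ)! : ℝ) * coeff (2*ℓ) (sSer ^ j))
      = ∑ j ∈ Finset.range (k+1), (-1 : ℝ) ^ j * (k.choose j) *
          (((2*ℓ)! : ℝ) * coeff (2*ℓ) (sSer ^ j)) := by
    rw [show Finset.range (k+1) = insert 0 (Finset.Icc 1 k) by
      ext x; simp only [Finset.mem_range, Finset.mem_insert, Finset.mem_Icc]; omega]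
    rw [Finset.sum_insert (by simp)]
    rw [hzero, zero_add]
  rw [step2]
  have expand : ∑ j ∈ Finset.range (k+1), (-1 : ℝ) ^ j * (k.choose j) *
          (((2*ℓ)! : ℝ) * coeff (2*ℓ) (sSer ^ j))
      = ((2*ℓ)! : ℝ) * ((-1:ℝ)^k * coeff (2*ℓ) ((sSer - 1)^k)) := by
    rw [sub_pow, map_sum, Finset.mul_sum, Finset.mul_sum]
    refine Finset.sum_congr rfl fun j hj => ?_
    have hC : ((-1:ℝ⟦X⟧)^(j+k) * sSer^j * 1^(k-j) * ((k.choose j : ℕ) : ℝ⟦X⟧))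
        = PowerSeries.C ((-1:ℝ)^(j+k) * ((k.choose j : ℕ) : ℝ)) * sSer^j := by
      simp only [map_mul, map_pow, map_neg, map_one, map_natCast, one_pow]
      ring
    rw [hC, coeff_C_mul]
    have hs : (-1:ℝ)^k * (-1:ℝ)^(j+k) = (-1)^j := by
      rw [← pow_add, show k+(j+k) = j + 2*k by omega, pow_add, pow_mul]
      norm_num
    rw [← hs]
    ring
  rw [expand]
  have h0 : coeff 0 (sSer - 1) = 0 := by
    rw [map_sub, sSer, coeff_mk]
    simp
  have h1' : coeff 1 (sSer - 1) = 0 := by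
    rw [map_sub, sSer, coeff_mk]
    rw [if_neg (by decide), coeff_one, if_neg (by omega)]
    ring
  rw [coeff_pow_eq_zero h0 h1' k (2*ℓ) (by omega)]
  ring
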